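/- arXiv:2001.10509 — 2 statements merged into one kernel-verified Lean document; each statement's English description precedes it below -/
import Mathlib

section
/- (MSE-optimal fusion of two 1-D convolutional layers.) Fix an output channel p' ∈ {1,…,P}. Assume the input channels are uncorrelated and that the matrix U^{m'} ∈ ℝ^{k̃×k̃} is invertible for every m' ∈ {1,…,M}. Then the filters h̃^{m',p'} = (U^{m'})⁻¹ · z^{m',p'} for m' = 1,…,M, together with the bias b̃^{p'} = Σ_{n=1}^{N} h2^{n,p'} *_{s2} ā1^{n} + b2^{p'} − Σ_{m=1}^{M} h̃^{m,p'} *_{s̃} ā0^{m}, minimize C-MSE^{p'} over all choices of M filters in ℝ^{k̃} and bias in ℝ^{L2}. -/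
open MeasureTheory Matrix

noncomputable section

/-- 1-based entry `j` of the zero-padded vector `Z(x) ∈ ℝ^{L+k-1}`, which pads
`x ∈ ℝ^L` with `⌊k/2⌋` zeros at the front and `⌊(k-1)/2⌋` zeros at the end
(entries outside `1,…,L+k-1` are also zero). -/
def padded {L : ℕ} (k : ℕ) (x : Fin L → ℝ) (j : ℤ) : ℝ :=
  if h : 1 ≤ j - ((k / 2 : ℕ) : ℤ) ∧ j - ((k / 2 : ℕ) : ℤ) ≤ (L : ℤ) then
    x ⟨(j - ((k / 2 : ℕ) : ℤ) - 1).toNat, by omega⟩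
  else 0

/-- 1-based entry `j` of `u = flip(Z(x))`. -/
def flipped {L : ℕ} (k : ℕ) (x : Fin L → ℝ) (j : ℤ) : ℝ :=
  padded k x ((L : ℤ) + (k : ℤ) - j)

/-- The subvector `u[L−i+1 : L−i+k]` of `u = flip(Z(x))`, as a vector in `ℝ^k`
(`i` is the 1-based stride position). -/
def window {L : ℕ} (k : ℕ) (x : Fin L → ℝ) (i : ℤ) : Fin k → ℝ :=
  fun a => flipped k x ((L : ℤ) - i + ((a : ℕ) : ℤ) + 1)

/-- Stride-`s` convolution `h *_s x` of a filter `h ∈ ℝ^k` with `x ∈ ℝ^L`: the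
`t`-th entry (0-based `t`, stride position `i = 1 + t·s`) equals
`(u[L−i+1 : L−i+k])ᵀ·h` with `u = flip(Z(x))`. The output length `T` should be
taken to be the number of stride positions `i = 1, 1+s, … ≤ L`. -/
def strideConv {L : ℕ} (k s T : ℕ) (h : Fin k → ℝ) (x : Fin L → ℝ) : Fin T → ℝ :=
  fun t => ∑ a : Fin k, window k x (1 + (t : ℕ) * s) a * h a

/-- Number of stride positions `i = 1, 1+s, 1+2s, … ≤ L`. -/
def numPos (L s : ℕ) : ℕ := (L + s - 1) / s


lemma window_cases {L : ℕ} (k : ℕ) (i : ℤ) (a : Fin k) :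
    (∃ idx : Fin L, ∀ x : Fin L → ℝ, window k x i a = x idx) ∨
    (∀ x : Fin L → ℝ, window k x i a = 0) := by
  unfold window flipped padded
  by_cases h : 1 ≤ ((L : ℤ) + (k : ℤ) - ((L : ℤ) - i + ((a : ℕ) : ℤ) + 1)) - ((k / 2 : ℕ) : ℤ) ∧
      ((L : ℤ) + (k : ℤ) - ((L : ℤ) - i + ((a : ℕ) : ℤ) + 1)) - ((k / 2 : ℕ) : ℤ) ≤ (L : ℤ)
  · exact Or.inl ⟨⟨_, by omega⟩, fun x => dif_pos h⟩
  · exact Or.inr fun x => dif_neg h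

lemma window_sub {L k : ℕ} (i : ℤ) (a : Fin k) (x y : Fin L → ℝ) :
    window k (fun j => x j - y j) i a = window k x i a - window k y i a := by
  rcases window_cases (L := L) k i a with ⟨idx, hid⟩ | hz
  · rw [hid, hid, hid]
  · rw [hz, hz, hz]; ring

lemma strideConv_sub {L k s T : ℕ} (h : Fin k → ℝ) (x y : Fin L → ℝ) (t : Fin T) :
    strideConv k s T h (fun j => x j - y j) t = strideConv k s T h x t - strideConv k s T h y t := by
  unfold strideConv
  rw [← Finset.sum_sub_distrib]
  exact Finset.sum_congr rfl fun a _ => by rw [window_sub]; ring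

lemma sum_comm3 {ι₁ ι₂ ι₃ : Type*} [Fintype ι₁] [Fintype ι₂] [Fintype ι₃]
    (f : ι₁ → ι₂ → ι₃ → ℝ) :
    ∑ x, ∑ y, ∑ z, f x y z = ∑ y, ∑ z, ∑ x, f x y z := by
  rw [Finset.sum_comm]
  exact Finset.sum_congr rfl fun y _ => Finset.sum_comm

section Meas

variable {Ωa : Type*} [MeasurableSpace Ωa] {μ : Measure Ωa}

lemma memLp_window {L k : ℕ} [IsFiniteMeasure μ] {x : Ωa → Fin L → ℝ}
    (hx : ∀ j, MemLp (fun ω => x ω j) 2 μ) (i : ℤ) (a : Fin k) :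
    MemLp (fun ω => window k (x ω) i a) 2 μ := by
  rcases window_cases (L := L) k i a with ⟨idx, hid⟩ | hz
  · simp only [hid]; exact hx idx
  · simp only [hz]; exact memLp_const 0

lemma integral_window_zero {L k : ℕ} {x : Ωa → Fin L → ℝ}
    (hx : ∀ j, ∫ ω, x ω j ∂μ = 0) (i : ℤ) (a : Fin k) :
    ∫ ω, window k (x ω) i a ∂μ = 0 := by
  rcases window_cases (L := L) k i a with ⟨idx, hid⟩ | hz
  · simp only [hid]; exact hx idx
  · simp only [hz]; simp

lemma integral_window_mul_zero {L L' k k' : ℕ} {x : Ωa → Fin L → ℝ} {y : Ωa → Fin L' → ℝ}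
    (hxy : ∀ i j, ∫ ω, x ω i * y ω j ∂μ = 0) (i i' : ℤ) (a : Fin k) (b : Fin k') :
    ∫ ω, window k (x ω) i a * window k' (y ω) i' b ∂μ = 0 := by
  rcases window_cases (L := L) k i a with ⟨ia, h1⟩ | h1 <;>
    rcases window_cases (L := L') k' i' b with ⟨ib, h2⟩ | h2 <;>
      simp only [h1, h2, mul_zero, zero_mul]
  · exact hxy ia ib
  all_goals simp

lemma L2mul {f g : Ωa → ℝ} (hf : MemLp f 2 μ) (hg : MemLp g 2 μ) :
    Integrable (fun ω => f ω * g ω) μ := by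
  rw [← memLp_one_iff_integrable]
  have h := hg.smul (q := 2) (p := 2) (r := 1) hf
  exact (by simpa [smul_eq_mul, mul_comm] using h : MemLp (f * g) 1 μ)

end Meas


def Sfun {Ωt : Type*} {M L0 ktil L2 : ℕ} (stil : ℕ) (a0 : Fin M → Ωt → Fin L0 → ℝ)
    (abar0 : Fin M → Fin L0 → ℝ) (g : Fin M → Fin ktil → ℝ) (ω : Ωt) (t : Fin L2) : ℝ :=
  ∑ m, strideConv ktil stil L2 (g m) (fun j => a0 m ω j - abar0 m j) t

def Cbias {M N k2 ktil L0 L1 L2 : ℕ} (s2 stil : ℕ) (h2 : Fin N → Fin k2 → ℝ) (b2 : Fin L2 → ℝ)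
    (abar1 : Fin N → Fin L1 → ℝ) (abar0 : Fin M → Fin L0 → ℝ)
    (gg : Fin M → Fin ktil → ℝ) (bb : Fin L2 → ℝ) (t : Fin L2) : ℝ :=
  ((∑ n, strideConv k2 s2 L2 (h2 n) (abar1 n)) + b2) t
    - ((∑ m, strideConv ktil stil L2 (gg m) (abar0 m)) + bb) t


/-- **MSE-optimal fusion of two 1-D convolutional layers (Theorem 2 of FuseInit).**
Assume the input channels are uncorrelated and each matrix `U^{m'}` is invertible.
Then the filters `h̃^{m',p'} = (U^{m'})⁻¹ · z^{m',p'}` together with the bias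
`b̃^{p'} = Σₙ h2^{n,p'} *_{s2} ā1ⁿ + b2^{p'} − Σₘ h̃^{m,p'} *_{s̃} ā0ᵐ`
minimize `C-MSE^{p'}` over all choices of `M` filters in `ℝ^{k̃}` and bias in `ℝ^{L2}`. -/
theorem fuseinit_conv_optimal
    {Ω : Type*} [MeasurableSpace Ω] (μ : Measure Ω) [IsProbabilityMeasure μ]
    {M N L0 L1 L2 k2 ktil : ℕ} (s2 stil : ℕ) (hs2 : 0 < s2) (hstil : 0 < stil)
    (hL2 : L2 = numPos L1 s2) (hL2' : L2 = numPos L0 stil)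
    (a0 : Fin M → Ω → Fin L0 → ℝ) (a1 : Fin N → Ω → Fin L1 → ℝ)
    (hInt0 : ∀ m i, Integrable (fun ω => a0 m ω i) μ)
    (hInt1 : ∀ n i, Integrable (fun ω => a1 n ω i) μ)
    (hInt00 : ∀ m m' i j, Integrable (fun ω => a0 m ω i * a0 m' ω j) μ)
    (hInt11 : ∀ n n' i j, Integrable (fun ω => a1 n ω i * a1 n' ω j) μ)
    (hInt10 : ∀ n m i j, Integrable (fun ω => a1 n ω i * a0 m ω j) μ)
    (abar0 : Fin M → Fin L0 → ℝ) (habar0 : ∀ m i, abar0 m i = ∫ ω, a0 m ω i ∂μ)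
    (abar1 : Fin N → Fin L1 → ℝ) (habar1 : ∀ n i, abar1 n i = ∫ ω, a1 n ω i ∂μ)
    (h2 : Fin N → Fin k2 → ℝ) (b2 : Fin L2 → ℝ)
    (huncorr : ∀ m m', m ≠ m' → ∀ i j,
      ∫ ω, (a0 m ω i - abar0 m i) * (a0 m' ω j - abar0 m' j) ∂μ = 0)
    (v : Ω → Fin L2 → ℝ)
    (hv : ∀ ω, v ω = ∑ n, strideConv k2 s2 L2 (h2 n) (fun j => a1 n ω j - abar1 n j))
    (U : Fin M → Matrix (Fin ktil) (Fin ktil) ℝ)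
    (hU : ∀ m a b, U m a b = ∫ ω, ∑ t : Fin L2,
      window ktil (fun j => a0 m ω j - abar0 m j) (1 + (t : ℕ) * stil) a
        * window ktil (fun j => a0 m ω j - abar0 m j) (1 + (t : ℕ) * stil) b ∂μ)
    (z : Fin M → Fin ktil → ℝ)
    (hz : ∀ m a, z m a = ∫ ω, ∑ t : Fin L2,
      v ω t * window ktil (fun j => a0 m ω j - abar0 m j) (1 + (t : ℕ) * stil) a ∂μ)
    (hUunit : ∀ m, IsUnit (U m))
    (CMSE : (Fin M → Fin ktil → ℝ) → (Fin L2 → ℝ) → ℝ)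
    (hCMSE : ∀ g b, CMSE g b = ∫ ω, ∑ t : Fin L2,
      (((∑ n, strideConv k2 s2 L2 (h2 n) (a1 n ω)) + b2) t
        - ((∑ m, strideConv ktil stil L2 (g m) (a0 m ω)) + b) t) ^ 2 ∂μ)
    (hopt : Fin M → Fin ktil → ℝ) (hhopt : ∀ m, hopt m = (U m)⁻¹.mulVec (z m))
    (bopt : Fin L2 → ℝ)
    (hbopt : bopt = (∑ n, strideConv k2 s2 L2 (h2 n) (abar1 n)) + b2
      - ∑ m, strideConv ktil stil L2 (hopt m) (abar0 m)) :
    ∀ (g : Fin M → Fin ktil → ℝ) (b : Fin L2 → ℝ), CMSE hopt bopt ≤ CMSE g b := by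
  intro g b
  -- basic L² facts
  have mem0 : ∀ m i, MemLp (fun ω => a0 m ω i) 2 μ := by
    intro m i
    rw [memLp_two_iff_integrable_sq (hInt0 m i).aestronglyMeasurable]
    simpa [pow_two] using hInt00 m m i i
  have mem1 : ∀ n i, MemLp (fun ω => a1 n ω i) 2 μ := by
    intro n i
    rw [memLp_two_iff_integrable_sq (hInt1 n i).aestronglyMeasurable]
    simpa [pow_two] using hInt11 n n i i
  have memd0 : ∀ m i, MemLp (fun ω => a0 m ω i - abar0 m i) 2 μ := by
    intro m i
    simpa [Pi.sub_def] using (mem0 m i).sub (memLp_const (abar0 m i))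
  have memd1 : ∀ n i, MemLp (fun ω => a1 n ω i - abar1 n i) 2 μ := by
    intro n i
    simpa [Pi.sub_def] using (mem1 n i).sub (memLp_const (abar1 n i))
  have memW0 : ∀ m (i : ℤ) (a : Fin ktil),
      MemLp (fun ω => window ktil (fun j => a0 m ω j - abar0 m j) i a) 2 μ :=
    fun m i a => memLp_window (fun j => memd0 m j) i a
  have memW1 : ∀ n (i : ℤ) (a : Fin k2),
      MemLp (fun ω => window k2 (fun j => a1 n ω j - abar1 n j) i a) 2 μ :=
    fun n i a => memLp_window (fun j => memd1 n j) i a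
  -- means
  have meand0 : ∀ m j, ∫ ω, (a0 m ω j - abar0 m j) ∂μ = 0 := by
    intro m j
    rw [integral_sub (hInt0 m j) (integrable_const _), integral_const]
    simp [habar0 m j]
  have meand1 : ∀ n j, ∫ ω, (a1 n ω j - abar1 n j) ∂μ = 0 := by
    intro n j
    rw [integral_sub (hInt1 n j) (integrable_const _), integral_const]
    simp [habar1 n j]
  have meanW0 : ∀ m (i : ℤ) (a : Fin ktil),
      ∫ ω, window ktil (fun j => a0 m ω j - abar0 m j) i a ∂μ = 0 :=
    fun m i a => integral_window_zero (meand0 m) i a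
  have meanW1 : ∀ n (i : ℤ) (a : Fin k2),
      ∫ ω, window k2 (fun j => a1 n ω j - abar1 n j) i a ∂μ = 0 :=
    fun n i a => integral_window_zero (meand1 n) i a
  have covW0 : ∀ m m', m ≠ m' → ∀ (i i' : ℤ) (a b : Fin ktil),
      ∫ ω, window ktil (fun j => a0 m ω j - abar0 m j) i a
        * window ktil (fun j => a0 m' ω j - abar0 m' j) i' b ∂μ = 0 :=
    fun m m' hne i i' a b => integral_window_mul_zero (huncorr m m' hne) i i' a b
  -- representation of v
  have vrep : ∀ ω (t : Fin L2), v ω t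
      = ∑ n, ∑ a, window k2 (fun j => a1 n ω j - abar1 n j) (1 + (t : ℕ) * s2) a * h2 n a := by
    intro ω t
    rw [hv, Finset.sum_apply]
    rfl
  have memv : ∀ t, MemLp (fun ω => v ω t) 2 μ := by
    intro t
    simp only [vrep]
    refine memLp_finset_sum _ fun n _ => memLp_finset_sum _ fun a _ => ?_
    simpa [mul_comm] using (memW1 n (1 + (t : ℕ) * s2) a).const_mul (h2 n a)
  have intv : ∀ t, Integrable (fun ω => v ω t) μ := fun t => (memv t).integrable one_le_two
  have meanv : ∀ t, ∫ ω, v ω t ∂μ = 0 := by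
    intro t
    simp only [vrep]
    rw [integral_finset_sum _ fun n _ => integrable_finset_sum _ fun a _ =>
      ((memW1 n _ a).integrable one_le_two).mul_const _]
    refine Finset.sum_eq_zero fun n _ => ?_
    rw [integral_finset_sum _ fun a _ => ((memW1 n _ a).integrable one_le_two).mul_const _]
    refine Finset.sum_eq_zero fun a _ => ?_
    rw [integral_mul_const, meanW1 n _ a, zero_mul]
  -- representation of S
  have Srep : ∀ (gg : Fin M → Fin ktil → ℝ) (ω : Ω) (t : Fin L2),
      Sfun stil a0 abar0 gg ω t
        = ∑ m, ∑ a, window ktil (fun j => a0 m ω j - abar0 m j) (1 + (t : ℕ) * stil) a * gg m a :=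
    fun gg ω t => rfl
  have memS : ∀ (gg : Fin M → Fin ktil → ℝ) (t : Fin L2), MemLp (fun ω => Sfun stil a0 abar0 gg ω t) 2 μ := by
    intro gg t
    simp only [Srep]
    refine memLp_finset_sum _ fun m _ => memLp_finset_sum _ fun a _ => ?_
    simpa [mul_comm] using (memW0 m (1 + (t : ℕ) * stil) a).const_mul (gg m a)
  have intS : ∀ (gg : Fin M → Fin ktil → ℝ) (t : Fin L2), Integrable (fun ω => Sfun stil a0 abar0 gg ω t) μ :=
    fun gg t => (memS gg t).integrable one_le_two
  have meanS : ∀ (gg : Fin M → Fin ktil → ℝ) (t : Fin L2), ∫ ω, Sfun stil a0 abar0 gg ω t ∂μ = 0 := by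
    intro gg t
    simp only [Srep]
    rw [integral_finset_sum _ fun m _ => integrable_finset_sum _ fun a _ =>
      ((memW0 m _ a).integrable one_le_two).mul_const _]
    refine Finset.sum_eq_zero fun m _ => ?_
    rw [integral_finset_sum _ fun a _ => ((memW0 m _ a).integrable one_le_two).mul_const _]
    refine Finset.sum_eq_zero fun a _ => ?_
    rw [integral_mul_const, meanW0 m _ a, zero_mul]
  have Ssub : ∀ (g1 g2 : Fin M → Fin ktil → ℝ) ω (t : Fin L2),
      Sfun stil a0 abar0 g1 ω t - Sfun stil a0 abar0 g2 ω t
        = Sfun stil a0 abar0 (g1 - g2) ω t := by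
    intro g1 g2 ω t
    simp only [Srep, ← Finset.sum_sub_distrib]
    refine Finset.sum_congr rfl fun m _ => Finset.sum_congr rfl fun a _ => ?_
    simp only [Pi.sub_apply]
    ring
  -- CMSE key formula
  have keyCMSE : ∀ gg bb, CMSE gg bb
      = (∫ ω, ∑ t : Fin L2, (v ω t - Sfun stil a0 abar0 gg ω t) ^ 2 ∂μ)
        + ∑ t : Fin L2, Cbias s2 stil h2 b2 abar1 abar0 gg bb t ^ 2 := by
    intro gg bb
    have hpt : ∀ ω (t : Fin L2),
        ((∑ n, strideConv k2 s2 L2 (h2 n) (a1 n ω)) + b2) t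
          - ((∑ m, strideConv ktil stil L2 (gg m) (a0 m ω)) + bb) t
        = (v ω t - Sfun stil a0 abar0 gg ω t) + Cbias s2 stil h2 b2 abar1 abar0 gg bb t := by
      intro ω t
      have hvt : v ω t = ∑ n, strideConv k2 s2 L2 (h2 n) (fun j => a1 n ω j - abar1 n j) t := by
        rw [hv, Finset.sum_apply]
      have hst : Sfun stil a0 abar0 gg ω t
          = ∑ m, strideConv ktil stil L2 (gg m) (fun j => a0 m ω j - abar0 m j) t := rfl
      have e1 : ∑ n, strideConv k2 s2 L2 (h2 n) (a1 n ω) t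
          = (∑ n, strideConv k2 s2 L2 (h2 n) (fun j => a1 n ω j - abar1 n j) t)
            + ∑ n, strideConv k2 s2 L2 (h2 n) (abar1 n) t := by
        rw [← Finset.sum_add_distrib]
        exact Finset.sum_congr rfl fun n _ => by rw [strideConv_sub]; ring
      have e0 : ∑ m, strideConv ktil stil L2 (gg m) (a0 m ω) t
          = (∑ m, strideConv ktil stil L2 (gg m) (fun j => a0 m ω j - abar0 m j) t)
            + ∑ m, strideConv ktil stil L2 (gg m) (abar0 m) t := by
        rw [← Finset.sum_add_distrib]
        exact Finset.sum_congr rfl fun m _ => by rw [strideConv_sub]; ring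
      simp only [Cbias, Pi.add_apply, Finset.sum_apply]
      rw [e1, e0, hvt, hst]
      ring
    have intF2 : Integrable (fun ω => ∑ t : Fin L2, (v ω t - Sfun stil a0 abar0 gg ω t) ^ 2) μ := by
      refine integrable_finset_sum _ fun t _ => ?_
      simpa [Pi.sub_def] using ((memv t).sub (memS gg t)).integrable_sq
    have iF : ∀ t : Fin L2, Integrable (fun ω => v ω t - Sfun stil a0 abar0 gg ω t) μ :=
      fun t => (intv t).sub (intS gg t)
    have int2cF : Integrable (fun ω => ∑ t : Fin L2,
        2 * Cbias s2 stil h2 b2 abar1 abar0 gg bb t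
          * (v ω t - Sfun stil a0 abar0 gg ω t)) μ :=
      integrable_finset_sum _ fun t _ => (iF t).const_mul _
    rw [hCMSE]
    have e : (fun ω => ∑ t : Fin L2,
        (((∑ n, strideConv k2 s2 L2 (h2 n) (a1 n ω)) + b2) t
          - ((∑ m, strideConv ktil stil L2 (gg m) (a0 m ω)) + bb) t) ^ 2)
        = fun ω => (∑ t : Fin L2, (v ω t - Sfun stil a0 abar0 gg ω t) ^ 2)
          + ((∑ t : Fin L2, 2 * Cbias s2 stil h2 b2 abar1 abar0 gg bb t
              * (v ω t - Sfun stil a0 abar0 gg ω t))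
            + ∑ t : Fin L2, Cbias s2 stil h2 b2 abar1 abar0 gg bb t ^ 2) := by
      funext ω
      rw [← Finset.sum_add_distrib, ← Finset.sum_add_distrib]
      exact Finset.sum_congr rfl fun t _ => by rw [hpt ω t]; ring
    have iconst : Integrable (fun _ : Ω =>
        ∑ t : Fin L2, Cbias s2 stil h2 b2 abar1 abar0 gg bb t ^ 2) μ := integrable_const _
    have iBC : Integrable (fun ω => (∑ t : Fin L2, 2 * Cbias s2 stil h2 b2 abar1 abar0 gg bb t
        * (v ω t - Sfun stil a0 abar0 gg ω t))
        + ∑ t : Fin L2, Cbias s2 stil h2 b2 abar1 abar0 gg bb t ^ 2) μ := int2cF.add iconst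
    rw [e, integral_add intF2 iBC, integral_add int2cF iconst, integral_const]
    have hz2 : ∫ ω, ∑ t : Fin L2, 2 * Cbias s2 stil h2 b2 abar1 abar0 gg bb t
        * (v ω t - Sfun stil a0 abar0 gg ω t) ∂μ = 0 := by
      rw [integral_finset_sum _ fun t _ => (iF t).const_mul _]
      refine Finset.sum_eq_zero fun t _ => ?_
      rw [integral_const_mul, integral_sub (intv t) (intS gg t), meanv t, meanS gg t]
      ring
    rw [hz2]
    simp
  -- covariance of v with S
  have covVS : ∀ δ : Fin M → Fin ktil → ℝ,
      ∫ ω, ∑ t : Fin L2, v ω t * Sfun stil a0 abar0 δ ω t ∂μ = ∑ m, ∑ a, z m a * δ m a := by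
    intro δ
    have hpt : (fun ω => ∑ t : Fin L2, v ω t * Sfun stil a0 abar0 δ ω t)
        = fun ω => ∑ m, ∑ a, (∑ t : Fin L2,
            v ω t * window ktil (fun j => a0 m ω j - abar0 m j) (1 + (t : ℕ) * stil) a)
          * δ m a := by
      funext ω
      simp only [Srep, Finset.mul_sum, Finset.sum_mul]
      rw [sum_comm3]
      exact Finset.sum_congr rfl fun m _ => Finset.sum_congr rfl fun a _ =>
        Finset.sum_congr rfl fun t _ => by ring
    have intin : ∀ (m : Fin M) (a : Fin ktil), Integrable (fun ω => (∑ t : Fin L2,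
        v ω t * window ktil (fun j => a0 m ω j - abar0 m j) (1 + (t : ℕ) * stil) a)
        * δ m a) μ :=
      fun m a => (integrable_finset_sum _ fun t _ => L2mul (memv t) (memW0 m _ a)).mul_const _
    rw [hpt, integral_finset_sum _ fun m _ => integrable_finset_sum _ fun a _ => intin m a]
    refine Finset.sum_congr rfl fun m _ => ?_
    rw [integral_finset_sum _ fun a _ => intin m a]
    refine Finset.sum_congr rfl fun a _ => ?_
    rw [integral_mul_const, hz m a]
  -- covariance of S with S
  have covTT : ∀ (m m' : Fin M) (a b : Fin ktil),
      ∫ ω, ∑ t : Fin L2, window ktil (fun j => a0 m ω j - abar0 m j) (1 + (t : ℕ) * stil) a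
        * window ktil (fun j => a0 m' ω j - abar0 m' j) (1 + (t : ℕ) * stil) b ∂μ
        = if m = m' then U m a b else 0 := by
    intro m m' a b
    by_cases hmm : m = m'
    · subst hmm; rw [if_pos rfl]; exact (hU m a b).symm
    · rw [if_neg hmm, integral_finset_sum _ fun t _ => L2mul (memW0 m _ a) (memW0 m' _ b)]
      exact Finset.sum_eq_zero fun t _ => covW0 m m' hmm _ _ a b
  have covSS : ∀ δ δ' : Fin M → Fin ktil → ℝ,
      ∫ ω, ∑ t : Fin L2, Sfun stil a0 abar0 δ ω t * Sfun stil a0 abar0 δ' ω t ∂μ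
        = ∑ m, ∑ a, ∑ b, U m b a * (δ m b * δ' m a) := by
    intro δ δ'
    have hpt : (fun ω => ∑ t : Fin L2, Sfun stil a0 abar0 δ ω t * Sfun stil a0 abar0 δ' ω t)
        = fun ω => ∑ m, ∑ a, ∑ b', ∑ m', (∑ t : Fin L2,
            window ktil (fun j => a0 m' ω j - abar0 m' j) (1 + (t : ℕ) * stil) b'
              * window ktil (fun j => a0 m ω j - abar0 m j) (1 + (t : ℕ) * stil) a)
            * (δ m' b' * δ' m a) := by
      funext ω
      simp only [Srep, Finset.sum_mul, Finset.mul_sum]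
      rw [sum_comm3]
      refine Finset.sum_congr rfl fun m _ => ?_
      refine Finset.sum_congr rfl fun a _ => ?_
      rw [sum_comm3, Finset.sum_comm]
      refine Finset.sum_congr rfl fun b' _ => Finset.sum_congr rfl fun m' _ =>
        Finset.sum_congr rfl fun t _ => by ring
    have intin : ∀ (m m' : Fin M) (a b' : Fin ktil), Integrable (fun ω => (∑ t : Fin L2,
        window ktil (fun j => a0 m' ω j - abar0 m' j) (1 + (t : ℕ) * stil) b'
          * window ktil (fun j => a0 m ω j - abar0 m j) (1 + (t : ℕ) * stil) a)
        * (δ m' b' * δ' m a)) μ :=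
      fun m m' a b' =>
        (integrable_finset_sum _ fun t _ => L2mul (memW0 m' _ b') (memW0 m _ a)).mul_const _
    rw [hpt, integral_finset_sum _ fun m _ => integrable_finset_sum _ fun a _ =>
      integrable_finset_sum _ fun b' _ => integrable_finset_sum _ fun m' _ => intin m m' a b']
    refine Finset.sum_congr rfl fun m _ => ?_
    rw [integral_finset_sum _ fun a _ => integrable_finset_sum _ fun b' _ =>
      integrable_finset_sum _ fun m' _ => intin m m' a b']
    refine Finset.sum_congr rfl fun a _ => ?_
    rw [integral_finset_sum _ fun b' _ => integrable_finset_sum _ fun m' _ => intin m m' a b']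
    refine Finset.sum_congr rfl fun b' _ => ?_
    rw [integral_finset_sum _ fun m' _ => intin m m' a b']
    have hval : ∀ m' : Fin M, ∫ ω, (∑ t : Fin L2,
        window ktil (fun j => a0 m' ω j - abar0 m' j) (1 + (t : ℕ) * stil) b'
          * window ktil (fun j => a0 m ω j - abar0 m j) (1 + (t : ℕ) * stil) a)
        * (δ m' b' * δ' m a) ∂μ
        = (if m' = m then U m' b' a else 0) * (δ m' b' * δ' m a) := by
      intro m'
      rw [integral_mul_const, covTT m' m b' a]
    rw [Finset.sum_congr rfl fun m' _ => hval m']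
    simp only [ite_mul, zero_mul, Finset.sum_ite_eq', Finset.mem_univ, if_true]
  -- symmetry of U and first-order condition
  have Usymm : ∀ m (a b : Fin ktil), U m a b = U m b a := by
    intro m a b
    rw [hU m a b, hU m b a]
    congr 1
    funext ω
    exact Finset.sum_congr rfl fun t _ => mul_comm _ _
  have hzU : ∀ m, z m = (U m).mulVec (hopt m) := by
    intro m
    rw [hhopt m, Matrix.mulVec_mulVec,
      Matrix.mul_nonsing_inv _ ((Matrix.isUnit_iff_isUnit_det _).mp (hUunit m)),
      Matrix.one_mulVec]
  have crosszero :
      ∫ ω, ∑ t : Fin L2, (v ω t - Sfun stil a0 abar0 hopt ω t)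
        * Sfun stil a0 abar0 (g - hopt) ω t ∂μ = 0 := by
    set δ := g - hopt with hδ
    have hpt : (fun ω => ∑ t : Fin L2,
        (v ω t - Sfun stil a0 abar0 hopt ω t) * Sfun stil a0 abar0 δ ω t)
        = fun ω => (∑ t : Fin L2, v ω t * Sfun stil a0 abar0 δ ω t)
          - ∑ t : Fin L2, Sfun stil a0 abar0 hopt ω t * Sfun stil a0 abar0 δ ω t := by
      funext ω
      rw [← Finset.sum_sub_distrib]
      exact Finset.sum_congr rfl fun t _ => by ring
    rw [hpt, integral_sub (integrable_finset_sum _ fun t _ => L2mul (memv t) (memS δ t))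
        (integrable_finset_sum _ fun t _ => L2mul (memS hopt t) (memS δ t)),
      covVS δ, covSS hopt δ, sub_eq_zero]
    refine Finset.sum_congr rfl fun m _ => Finset.sum_congr rfl fun a _ => ?_
    rw [hzU m]
    show (∑ b, U m a b * hopt m b) * δ m a = ∑ b, U m b a * (hopt m b * δ m a)
    rw [Finset.sum_mul]
    exact Finset.sum_congr rfl fun b _ => by rw [Usymm m b a]; ring
  -- quadratic expansion around the optimum
  have key2 : ∫ ω, ∑ t : Fin L2, (v ω t - Sfun stil a0 abar0 g ω t) ^ 2 ∂μ
      = (∫ ω, ∑ t : Fin L2, (v ω t - Sfun stil a0 abar0 hopt ω t) ^ 2 ∂μ)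
        - 2 * (∫ ω, ∑ t : Fin L2, (v ω t - Sfun stil a0 abar0 hopt ω t)
            * Sfun stil a0 abar0 (g - hopt) ω t ∂μ)
        + ∫ ω, ∑ t : Fin L2, Sfun stil a0 abar0 (g - hopt) ω t ^ 2 ∂μ := by
    have hpt : (fun ω => ∑ t : Fin L2, (v ω t - Sfun stil a0 abar0 g ω t) ^ 2)
        = fun ω => ((∑ t : Fin L2, (v ω t - Sfun stil a0 abar0 hopt ω t) ^ 2)
            - ∑ t : Fin L2, 2 * ((v ω t - Sfun stil a0 abar0 hopt ω t)
              * Sfun stil a0 abar0 (g - hopt) ω t))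
          + ∑ t : Fin L2, Sfun stil a0 abar0 (g - hopt) ω t ^ 2 := by
      funext ω
      rw [← Finset.sum_sub_distrib, ← Finset.sum_add_distrib]
      refine Finset.sum_congr rfl fun t _ => ?_
      have h1 : v ω t - Sfun stil a0 abar0 g ω t
          = (v ω t - Sfun stil a0 abar0 hopt ω t) - Sfun stil a0 abar0 (g - hopt) ω t := by
        rw [← Ssub g hopt ω t]; ring
      rw [h1]; ring
    have i1 : Integrable (fun ω => ∑ t : Fin L2,
        (v ω t - Sfun stil a0 abar0 hopt ω t) ^ 2) μ := by
      refine integrable_finset_sum _ fun t _ => ?_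
      simpa [Pi.sub_def] using ((memv t).sub (memS hopt t)).integrable_sq
    have i2 : Integrable (fun ω => ∑ t : Fin L2, 2 * ((v ω t - Sfun stil a0 abar0 hopt ω t)
        * Sfun stil a0 abar0 (g - hopt) ω t)) μ := by
      refine integrable_finset_sum _ fun t _ => Integrable.const_mul ?_ 2
      have e : (fun ω => (v ω t - Sfun stil a0 abar0 hopt ω t)
          * Sfun stil a0 abar0 (g - hopt) ω t)
          = fun ω => v ω t * Sfun stil a0 abar0 (g - hopt) ω t
            - Sfun stil a0 abar0 hopt ω t * Sfun stil a0 abar0 (g - hopt) ω t := by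
        funext ω; ring
      rw [e]
      exact (L2mul (memv t) (memS _ t)).sub (L2mul (memS hopt t) (memS _ t))
    have i3 : Integrable (fun ω => ∑ t : Fin L2,
        Sfun stil a0 abar0 (g - hopt) ω t ^ 2) μ :=
      integrable_finset_sum _ fun t _ => (memS _ t).integrable_sq
    have i12 : Integrable (fun ω => (∑ t : Fin L2, (v ω t - Sfun stil a0 abar0 hopt ω t) ^ 2)
        - ∑ t : Fin L2, 2 * ((v ω t - Sfun stil a0 abar0 hopt ω t)
          * Sfun stil a0 abar0 (g - hopt) ω t)) μ := i1.sub i2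
    rw [hpt, integral_add i12 i3, integral_sub i1 i2]
    have e2 : ∫ ω, ∑ t : Fin L2, 2 * ((v ω t - Sfun stil a0 abar0 hopt ω t)
        * Sfun stil a0 abar0 (g - hopt) ω t) ∂μ
        = 2 * ∫ ω, ∑ t : Fin L2, (v ω t - Sfun stil a0 abar0 hopt ω t)
            * Sfun stil a0 abar0 (g - hopt) ω t ∂μ := by
      rw [← integral_const_mul]
      congr 1
      funext ω
      rw [Finset.mul_sum]
    rw [e2]
  -- assemble
  have nonnegSS : 0 ≤ ∫ ω, ∑ t : Fin L2, Sfun stil a0 abar0 (g - hopt) ω t ^ 2 ∂μ :=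
    integral_nonneg fun ω => Finset.sum_nonneg fun t _ => sq_nonneg _
  have hcopt : ∀ t : Fin L2, Cbias s2 stil h2 b2 abar1 abar0 hopt bopt t = 0 := by
    intro t
    simp only [Cbias, hbopt, Pi.add_apply, Pi.sub_apply]
    ring
  have final1 : CMSE hopt bopt
      = ∫ ω, ∑ t : Fin L2, (v ω t - Sfun stil a0 abar0 hopt ω t) ^ 2 ∂μ := by
    rw [keyCMSE hopt bopt]
    have : ∑ t : Fin L2, Cbias s2 stil h2 b2 abar1 abar0 hopt bopt t ^ 2 = 0 :=
      Finset.sum_eq_zero fun t _ => by rw [hcopt t]; ring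
    rw [this, add_zero]
  have hcnn : 0 ≤ ∑ t : Fin L2, Cbias s2 stil h2 b2 abar1 abar0 g b t ^ 2 :=
    Finset.sum_nonneg fun t _ => sq_nonneg _
  rw [final1, keyCMSE g b]
  rw [crosszero] at key2
  linarith [key2, nonnegSS, hcnn]

end
end

section
/- (Stationarity characterization for convolutional fusion.) Fix an output channel p' and suppose the input channels are uncorrelated. Filters h̃^{1,p'},…,h̃^{M,p'} ∈ ℝ^{k̃} minimize E[‖v^{p'} − Σ_{m=1}^{M} h̃^{m,p'} *_{s̃} (a0^{m} − ā0^{m})‖₂²] if and only if U^{m}·h̃^{m,p'} = z^{m,p'} for every m = 1,…,M. -/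
open MeasureTheory Matrix

noncomputable section

/- ### Auxiliary material -/

lemma padded_rep {L : ℕ} (k : ℕ) (j : ℤ) :
    (∀ x : Fin L → ℝ, padded k x j = 0) ∨ ∃ i : Fin L, ∀ x : Fin L → ℝ, padded k x j = x i := by
  unfold padded
  by_cases h : 1 ≤ j - ((k / 2 : ℕ) : ℤ) ∧ j - ((k / 2 : ℕ) : ℤ) ≤ (L : ℤ)
  · exact Or.inr ⟨⟨(j - ((k / 2 : ℕ) : ℤ) - 1).toNat, by omega⟩, fun x => dif_pos h⟩
  · exact Or.inl fun x => dif_neg h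

lemma window_rep {L : ℕ} (k : ℕ) (i : ℤ) (a : Fin k) :
    (∀ x : Fin L → ℝ, window k x i a = 0) ∨ ∃ j : Fin L, ∀ x : Fin L → ℝ, window k x i a = x j := by
  rcases padded_rep (L := L) k ((L : ℤ) + (k : ℤ) - ((L : ℤ) - i + ((a : ℕ) : ℤ) + 1)) with h | ⟨j, h⟩
  · exact Or.inl fun x => h x
  · exact Or.inr ⟨j, fun x => h x⟩

namespace FuseAux

lemma sum_comm3 {β : Type*} [AddCommMonoid β] {T P Q : Type*} [Fintype T] [Fintype P] [Fintype Q]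
    (f : T → P → Q → β) :
    ∑ t, ∑ p, ∑ q, f t p q = ∑ p, ∑ q, ∑ t, f t p q := by
  rw [Finset.sum_comm]
  exact Finset.sum_congr rfl fun p _ => Finset.sum_comm

lemma sum_comm5 {β : Type*} [AddCommMonoid β] {T A B C D : Type*}
    [Fintype T] [Fintype A] [Fintype B] [Fintype C] [Fintype D]
    (f : T → A → B → C → D → β) :
    ∑ t, ∑ a, ∑ b, ∑ c, ∑ d, f t a b c d = ∑ a, ∑ b, ∑ c, ∑ d, ∑ t, f t a b c d := by
  rw [Finset.sum_comm]
  refine Finset.sum_congr rfl fun a _ => ?_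
  rw [Finset.sum_comm]
  refine Finset.sum_congr rfl fun b _ => ?_
  exact sum_comm3 _

variable {M k : ℕ}

def S (z g : Fin M → Fin k → ℝ) : ℝ := ∑ m, ∑ a, z m a * g m a
def B (U : Fin M → Matrix (Fin k) (Fin k) ℝ) (g d : Fin M → Fin k → ℝ) : ℝ :=
  ∑ m, ∑ a, ∑ b, g m a * U m a b * d m b

lemma B_symm {U : Fin M → Matrix (Fin k) (Fin k) ℝ}
    (hs : ∀ m a b, U m a b = U m b a) (g d : Fin M → Fin k → ℝ) : B U g d = B U d g := by
  unfold B
  refine Finset.sum_congr rfl fun m _ => ?_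
  rw [Finset.sum_comm]
  refine Finset.sum_congr rfl fun a _ => Finset.sum_congr rfl fun b _ => ?_
  rw [hs m b a]; ring

lemma B_add_right (U : Fin M → Matrix (Fin k) (Fin k) ℝ) (g d d' : Fin M → Fin k → ℝ) :
    B U g (fun m a => d m a + d' m a) = B U g d + B U g d' := by
  simp only [B, mul_add, Finset.sum_add_distrib]

lemma B_smul_right (U : Fin M → Matrix (Fin k) (Fin k) ℝ) (c : ℝ) (g d : Fin M → Fin k → ℝ) :
    B U g (fun m a => c * d m a) = c * B U g d := by
  simp only [B, Finset.mul_sum]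
  refine Finset.sum_congr rfl fun m _ => Finset.sum_congr rfl fun a _ =>
    Finset.sum_congr rfl fun b _ => by ring

lemma S_add (z g g' : Fin M → Fin k → ℝ) :
    S z (fun m a => g m a + g' m a) = S z g + S z g' := by
  simp only [S, mul_add, Finset.sum_add_distrib]

lemma S_smul (z : Fin M → Fin k → ℝ) (c : ℝ) (g : Fin M → Fin k → ℝ) :
    S z (fun m a => c * g m a) = c * S z g := by
  simp only [S, Finset.mul_sum]
  refine Finset.sum_congr rfl fun m _ => Finset.sum_congr rfl fun a _ => by ring

lemma B_quad {U : Fin M → Matrix (Fin k) (Fin k) ℝ}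
    (hs : ∀ m a b, U m a b = U m b a) (g d : Fin M → Fin k → ℝ) :
    B U (fun m a => g m a + d m a) (fun m a => g m a + d m a)
      = B U g g + 2 * B U g d + B U d d := by
  have h1 : B U (fun m a => g m a + d m a) (fun m a => g m a + d m a)
      = B U (fun m a => g m a + d m a) g + B U (fun m a => g m a + d m a) d :=
    B_add_right U _ g d
  have h2 : B U g (fun m a => g m a + d m a) = B U g g + B U g d := B_add_right U g g d
  have h3 : B U d (fun m a => g m a + d m a) = B U d g + B U d d := B_add_right U d g d
  rw [h1, B_symm hs _ g, B_symm hs _ d, h2, h3, B_symm hs d g]; ring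

lemma abstract_min (U : Fin M → Matrix (Fin k) (Fin k) ℝ) (z : Fin M → Fin k → ℝ)
    (hs : ∀ m a b, U m a b = U m b a) (hpos : ∀ d, 0 ≤ B U d d) (h : Fin M → Fin k → ℝ) :
    (∀ g, -2 * S z h + B U h h ≤ -2 * S z g + B U g g) ↔ ∀ m, (U m).mulVec (h m) = z m := by
  constructor
  · intro hmin m
    funext a
    set e : Fin M → Fin k → ℝ :=
      fun m' b => if m' = m then (if b = a then 1 else 0) else 0 with he
    have hSe : S z e = z m a := by
      unfold S
      have h1 : ∀ m' : Fin M, (∑ b, z m' b * e m' b) = if m' = m then z m' a else 0 := by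
        intro m'
        by_cases hm : m' = m
        · subst hm; simp [he, mul_ite]
        · simp [he, hm]
      simp only [h1]
      simp
    have hBhe : B U h e = (U m).mulVec (h m) a := by
      unfold B
      have h1 : ∀ m' : Fin M, (∑ a', ∑ b, h m' a' * U m' a' b * e m' b)
          = if m' = m then ∑ a', h m a' * U m a' a else 0 := by
        intro m'
        by_cases hm : m' = m
        · subst hm; simp [he, mul_ite]
        · simp [he, hm]
      simp only [h1]
      rw [Finset.sum_ite_eq' Finset.univ m]
      simp [mulVec, dotProduct]
      refine Finset.sum_congr rfl fun a' _ => by rw [hs m a' a]; ring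
    have hBee : B U e e = U m a a := by
      unfold B
      have h1 : ∀ m' : Fin M, (∑ a', ∑ b, e m' a' * U m' a' b * e m' b)
          = if m' = m then U m a a else 0 := by
        intro m'
        by_cases hm : m' = m
        · subst hm; simp [he, ite_mul, mul_ite]
        · simp [he, hm]
      simp only [h1]
      simp
    have key : ∀ ε : ℝ, 0 ≤ 2 * ε * ((U m).mulVec (h m) a - z m a) + ε ^ 2 * B U e e := by
      intro ε
      have h0 := hmin (fun m' b => h m' b + ε * e m' b)
      have hS : S z (fun m' b => h m' b + ε * e m' b) = S z h + ε * S z e := by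
        rw [S_add z h (fun m' b => ε * e m' b), S_smul]
      have hB : B U (fun m' b => h m' b + ε * e m' b) (fun m' b => h m' b + ε * e m' b)
          = B U h h + 2 * (ε * B U h e) + ε ^ 2 * B U e e := by
        rw [B_quad hs h (fun m' b => ε * e m' b), B_smul_right]
        have : B U (fun m' b => ε * e m' b) (fun m' b => ε * e m' b)
            = ε * B U e (fun m' b => ε * e m' b) := by
          rw [B_symm hs, B_smul_right, B_symm hs]
        rw [this, B_smul_right]; ring
      rw [hS, hB, hSe, hBhe] at h0
      nlinarith [h0]
    have hq : 0 ≤ B U e e := hpos e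
    set c : ℝ := (U m).mulVec (h m) a - z m a with hc
    set q : ℝ := B U e e with hq'
    have h1 := key (-c / (q + 1))
    have hq1 : 0 < q + 1 := by linarith
    have hcz : c = 0 := by
      have hne : q + 1 ≠ 0 := ne_of_gt hq1
      have h5 : 0 ≤ (2 * (-c / (q + 1)) * c + (-c / (q + 1)) ^ 2 * q) * (q + 1) ^ 2 :=
        mul_nonneg h1 (sq_nonneg _)
      have h6 : (2 * (-c / (q + 1)) * c + (-c / (q + 1)) ^ 2 * q) * (q + 1) ^ 2
          = c ^ 2 * (q - 2 * (q + 1)) := by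
        field_simp
        ring
      rw [h6] at h5
      nlinarith [sq_nonneg c]
    linarith [hcz, hc.symm.trans hcz]
  · intro heq g
    have hSz : ∀ x : Fin M → Fin k → ℝ, S z x = B U x h := by
      intro x
      unfold S B
      refine Finset.sum_congr rfl fun m _ => Finset.sum_congr rfl fun a _ => ?_
      have : z m a = ∑ b, U m a b * h m b := by
        rw [← heq m]; simp [mulVec, dotProduct]
      rw [this, Finset.sum_mul]
      refine Finset.sum_congr rfl fun b _ => by ring
    set d : Fin M → Fin k → ℝ := fun m a => g m a - h m a with hd
    have hg : g = fun m a => h m a + d m a := by funext m a; simp [hd]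
    have hBg : B U g g = B U h h + 2 * B U h d + B U d d := by
      rw [hg]; exact B_quad hs h d
    have hBgh : B U g h = B U h h + B U d h := by
      rw [hg]; rw [B_symm hs _ h, B_add_right, B_symm hs h h, B_symm hs h d, B_symm hs d h]
    rw [hSz g, hSz h, hBg, hBgh, B_symm hs d h]
    nlinarith [hpos d]

end FuseAux

/-- **Stationarity characterization for convolutional fusion.** If the input channels
are uncorrelated, then the filters `h̃^{1,p'},…,h̃^{M,p'}` minimize
`E[‖v^{p'} − Σₘ h̃^{m,p'} *_{s̃} (a0ᵐ − ā0ᵐ)‖₂²]` if and only if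
`Uᵐ·h̃^{m,p'} = z^{m,p'}` for every `m`. -/
theorem fuseinit_conv_stationarity
    {Ω : Type*} [MeasurableSpace Ω] (μ : Measure Ω) [IsProbabilityMeasure μ]
    {M N L0 L1 L2 k2 ktil : ℕ} (s2 stil : ℕ) (hs2 : 0 < s2) (hstil : 0 < stil)
    (hL2 : L2 = numPos L1 s2) (hL2' : L2 = numPos L0 stil)
    (a0 : Fin M → Ω → Fin L0 → ℝ) (a1 : Fin N → Ω → Fin L1 → ℝ)
    (hInt0 : ∀ m i, Integrable (fun ω => a0 m ω i) μ)
    (hInt1 : ∀ n i, Integrable (fun ω => a1 n ω i) μ)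
    (hInt00 : ∀ m m' i j, Integrable (fun ω => a0 m ω i * a0 m' ω j) μ)
    (hInt11 : ∀ n n' i j, Integrable (fun ω => a1 n ω i * a1 n' ω j) μ)
    (hInt10 : ∀ n m i j, Integrable (fun ω => a1 n ω i * a0 m ω j) μ)
    (abar0 : Fin M → Fin L0 → ℝ) (habar0 : ∀ m i, abar0 m i = ∫ ω, a0 m ω i ∂μ)
    (abar1 : Fin N → Fin L1 → ℝ) (habar1 : ∀ n i, abar1 n i = ∫ ω, a1 n ω i ∂μ)
    (h2 : Fin N → Fin k2 → ℝ)
    (huncorr : ∀ m m', m ≠ m' → ∀ i j,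
      ∫ ω, (a0 m ω i - abar0 m i) * (a0 m' ω j - abar0 m' j) ∂μ = 0)
    (v : Ω → Fin L2 → ℝ)
    (hv : ∀ ω, v ω = ∑ n, strideConv k2 s2 L2 (h2 n) (fun j => a1 n ω j - abar1 n j))
    (U : Fin M → Matrix (Fin ktil) (Fin ktil) ℝ)
    (hU : ∀ m a b, U m a b = ∫ ω, ∑ t : Fin L2,
      window ktil (fun j => a0 m ω j - abar0 m j) (1 + (t : ℕ) * stil) a
        * window ktil (fun j => a0 m ω j - abar0 m j) (1 + (t : ℕ) * stil) b ∂μ)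
    (z : Fin M → Fin ktil → ℝ)
    (hz : ∀ m a, z m a = ∫ ω, ∑ t : Fin L2,
      v ω t * window ktil (fun j => a0 m ω j - abar0 m j) (1 + (t : ℕ) * stil) a ∂μ)
    (F : (Fin M → Fin ktil → ℝ) → ℝ)
    (hF : ∀ g, F g = ∫ ω, ∑ t : Fin L2,
      ((v ω - ∑ m, strideConv ktil stil L2 (g m) (fun j => a0 m ω j - abar0 m j)) t) ^ 2 ∂μ) :
    ∀ htil : Fin M → Fin ktil → ℝ,
      (∀ g : Fin M → Fin ktil → ℝ, F htil ≤ F g)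
        ↔ ∀ m, (U m).mulVec (htil m) = z m := by
  -- integrability of centered variables and their products
  have hI00c : ∀ (m m' : Fin M) i j,
      Integrable (fun ω => (a0 m ω i - abar0 m i) * (a0 m' ω j - abar0 m' j)) μ := by
    intro m m' i j
    have heq : (fun ω => (a0 m ω i - abar0 m i) * (a0 m' ω j - abar0 m' j))
        = fun ω => a0 m ω i * a0 m' ω j - abar0 m i * a0 m' ω j
            - abar0 m' j * a0 m ω i + abar0 m i * abar0 m' j := by
      funext ω; ring
    rw [heq]
    exact (((hInt00 m m' i j).sub ((hInt0 m' j).const_mul _)).sub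
      ((hInt0 m i).const_mul _)).add (integrable_const _)
  have hI11c : ∀ (n n' : Fin N) i j,
      Integrable (fun ω => (a1 n ω i - abar1 n i) * (a1 n' ω j - abar1 n' j)) μ := by
    intro n n' i j
    have heq : (fun ω => (a1 n ω i - abar1 n i) * (a1 n' ω j - abar1 n' j))
        = fun ω => a1 n ω i * a1 n' ω j - abar1 n i * a1 n' ω j
            - abar1 n' j * a1 n ω i + abar1 n i * abar1 n' j := by
      funext ω; ring
    rw [heq]
    exact (((hInt11 n n' i j).sub ((hInt1 n' j).const_mul _)).sub
      ((hInt1 n i).const_mul _)).add (integrable_const _)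
  have hI10c : ∀ (n : Fin N) (m : Fin M) i j,
      Integrable (fun ω => (a1 n ω i - abar1 n i) * (a0 m ω j - abar0 m j)) μ := by
    intro n m i j
    have heq : (fun ω => (a1 n ω i - abar1 n i) * (a0 m ω j - abar0 m j))
        = fun ω => a1 n ω i * a0 m ω j - abar1 n i * a0 m ω j
            - abar0 m j * a1 n ω i + abar1 n i * abar0 m j := by
      funext ω; ring
    rw [heq]
    exact (((hInt10 n m i j).sub ((hInt0 m j).const_mul _)).sub
      ((hInt1 n i).const_mul _)).add (integrable_const _)
  -- integrability of products of windows
  have hIww00 : ∀ (m m' : Fin M) (p p' : ℤ) (a b : Fin ktil),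
      Integrable (fun ω => window ktil (fun j => a0 m ω j - abar0 m j) p a
        * window ktil (fun j => a0 m' ω j - abar0 m' j) p' b) μ := by
    intro m m' p p' a b
    rcases window_rep (L := L0) ktil p a with h | ⟨i, h⟩
    · simp only [h, zero_mul]; exact integrable_const 0
    · rcases window_rep (L := L0) ktil p' b with h' | ⟨j, h'⟩
      · simp only [h', mul_zero]; exact integrable_const 0
      · simp only [h, h']; exact hI00c m m' i j
  have hIww10 : ∀ (n : Fin N) (m : Fin M) (p p' : ℤ) (c : Fin k2) (a : Fin ktil),
      Integrable (fun ω => window k2 (fun j => a1 n ω j - abar1 n j) p c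
        * window ktil (fun j => a0 m ω j - abar0 m j) p' a) μ := by
    intro n m p p' c a
    rcases window_rep (L := L1) k2 p c with h | ⟨i, h⟩
    · simp only [h, zero_mul]; exact integrable_const 0
    · rcases window_rep (L := L0) ktil p' a with h' | ⟨j, h'⟩
      · simp only [h', mul_zero]; exact integrable_const 0
      · simp only [h, h']; exact hI10c n m i j
  have hIww11 : ∀ (n n' : Fin N) (p p' : ℤ) (c c' : Fin k2),
      Integrable (fun ω => window k2 (fun j => a1 n ω j - abar1 n j) p c
        * window k2 (fun j => a1 n' ω j - abar1 n' j) p' c') μ := by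
    intro n n' p p' c c'
    rcases window_rep (L := L1) k2 p c with h | ⟨i, h⟩
    · simp only [h, zero_mul]; exact integrable_const 0
    · rcases window_rep (L := L1) k2 p' c' with h' | ⟨j, h'⟩
      · simp only [h', mul_zero]; exact integrable_const 0
      · simp only [h, h']; exact hI11c n n' i j
  -- uncorrelatedness at the level of windows
  have hUc : ∀ (m m' : Fin M), m ≠ m' → ∀ (p p' : ℤ) (a b : Fin ktil),
      ∫ ω, window ktil (fun j => a0 m ω j - abar0 m j) p a
        * window ktil (fun j => a0 m' ω j - abar0 m' j) p' b ∂μ = 0 := by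
    intro m m' hmm p p' a b
    rcases window_rep (L := L0) ktil p a with h | ⟨i, h⟩
    · simp [h]
    · rcases window_rep (L := L0) ktil p' b with h' | ⟨j, h'⟩
      · simp [h']
      · simp only [h, h']; exact huncorr m m' hmm i j
  -- pointwise expansion of v
  have hvt : ∀ ω (t : Fin L2), v ω t = ∑ n, ∑ c : Fin k2,
      window k2 (fun j => a1 n ω j - abar1 n j) (1 + (t : ℕ) * s2) c * h2 n c := by
    intro ω t
    rw [hv ω]
    simp only [Finset.sum_apply, strideConv]
  -- integrability of v * window and v * v
  have hIvw : ∀ (t : Fin L2) (m : Fin M) (p : ℤ) (a : Fin ktil),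
      Integrable (fun ω => v ω t * window ktil (fun j => a0 m ω j - abar0 m j) p a) μ := by
    intro t m p a
    have heq : (fun ω => v ω t * window ktil (fun j => a0 m ω j - abar0 m j) p a)
        = fun ω => ∑ n, ∑ c : Fin k2,
            (window k2 (fun j => a1 n ω j - abar1 n j) (1 + (t : ℕ) * s2) c
              * window ktil (fun j => a0 m ω j - abar0 m j) p a) * h2 n c := by
      funext ω
      rw [hvt ω t, Finset.sum_mul]
      refine Finset.sum_congr rfl fun n _ => ?_
      rw [Finset.sum_mul]
      exact Finset.sum_congr rfl fun c _ => by ring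
    rw [heq]
    exact integrable_finset_sum _ fun n _ => integrable_finset_sum _ fun c _ =>
      (hIww10 n m _ p c a).mul_const _
  have hIvv : ∀ (t t' : Fin L2), Integrable (fun ω => v ω t * v ω t') μ := by
    intro t t'
    have heq : (fun ω => v ω t * v ω t')
        = fun ω => ∑ n, ∑ n', ∑ c : Fin k2, ∑ c' : Fin k2,
            (window k2 (fun j => a1 n ω j - abar1 n j) (1 + (t : ℕ) * s2) c
              * window k2 (fun j => a1 n' ω j - abar1 n' j) (1 + (t' : ℕ) * s2) c')
              * (h2 n c * h2 n' c') := by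
      funext ω
      rw [hvt ω t, hvt ω t', Finset.sum_mul_sum]
      refine Finset.sum_congr rfl fun n _ => Finset.sum_congr rfl fun n' _ => ?_
      rw [Finset.sum_mul_sum]
      exact Finset.sum_congr rfl fun c _ => Finset.sum_congr rfl fun c' _ => by ring
    rw [heq]
    exact integrable_finset_sum _ fun n _ => integrable_finset_sum _ fun n' _ =>
      integrable_finset_sum _ fun c _ => integrable_finset_sum _ fun c' _ =>
        (hIww11 n n' _ _ c c').mul_const _
  -- the two main integral identities
  have hintvW : ∀ g : Fin M → Fin ktil → ℝ,
      ∫ ω, ∑ t : Fin L2, v ω t * (∑ m, ∑ a,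
        window ktil (fun j => a0 m ω j - abar0 m j) (1 + (t : ℕ) * stil) a * g m a) ∂μ
        = FuseAux.S z g := by
    intro g
    have heq : ∀ ω, (∑ t : Fin L2, v ω t * (∑ m, ∑ a,
        window ktil (fun j => a0 m ω j - abar0 m j) (1 + (t : ℕ) * stil) a * g m a))
        = ∑ m, ∑ a, (∑ t : Fin L2,
            v ω t * window ktil (fun j => a0 m ω j - abar0 m j) (1 + (t : ℕ) * stil) a)
            * g m a := by
      intro ω
      have h1 : (∑ t : Fin L2, v ω t * (∑ m, ∑ a,
          window ktil (fun j => a0 m ω j - abar0 m j) (1 + (t : ℕ) * stil) a * g m a))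
          = ∑ t : Fin L2, ∑ m, ∑ a,
            (v ω t * window ktil (fun j => a0 m ω j - abar0 m j) (1 + (t : ℕ) * stil) a)
              * g m a := by
        refine Finset.sum_congr rfl fun t _ => ?_
        rw [Finset.mul_sum]
        refine Finset.sum_congr rfl fun m _ => ?_
        rw [Finset.mul_sum]
        exact Finset.sum_congr rfl fun a _ => by ring
      rw [h1, FuseAux.sum_comm3]
      exact Finset.sum_congr rfl fun m _ => Finset.sum_congr rfl fun a _ =>
        (Finset.sum_mul _ _ _).symm
    simp only [heq]
    rw [integral_finset_sum _ fun m _ => integrable_finset_sum _ fun a _ =>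
      (integrable_finset_sum _ fun t _ => hIvw t m _ a).mul_const _]
    unfold FuseAux.S
    refine Finset.sum_congr rfl fun m _ => ?_
    rw [integral_finset_sum _ fun a _ =>
      (integrable_finset_sum _ fun t _ => hIvw t m _ a).mul_const _]
    refine Finset.sum_congr rfl fun a _ => ?_
    rw [integral_mul_const, ← hz m a]
  have hintWW : ∀ g g' : Fin M → Fin ktil → ℝ,
      ∫ ω, ∑ t : Fin L2, (∑ m, ∑ a,
        window ktil (fun j => a0 m ω j - abar0 m j) (1 + (t : ℕ) * stil) a * g m a)
        * (∑ m, ∑ b, window ktil (fun j => a0 m ω j - abar0 m j) (1 + (t : ℕ) * stil) b * g' m b) ∂μ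
        = FuseAux.B U g g' := by
    intro g g'
    have heq : ∀ ω, (∑ t : Fin L2, (∑ m, ∑ a,
        window ktil (fun j => a0 m ω j - abar0 m j) (1 + (t : ℕ) * stil) a * g m a)
        * (∑ m, ∑ b, window ktil (fun j => a0 m ω j - abar0 m j) (1 + (t : ℕ) * stil) b * g' m b))
        = ∑ m, ∑ m', ∑ a, ∑ b, (∑ t : Fin L2,
            window ktil (fun j => a0 m ω j - abar0 m j) (1 + (t : ℕ) * stil) a
              * window ktil (fun j => a0 m' ω j - abar0 m' j) (1 + (t : ℕ) * stil) b)
            * (g m a * g' m' b) := by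
      intro ω
      have h1 : (∑ t : Fin L2, (∑ m, ∑ a,
          window ktil (fun j => a0 m ω j - abar0 m j) (1 + (t : ℕ) * stil) a * g m a)
          * (∑ m, ∑ b, window ktil (fun j => a0 m ω j - abar0 m j) (1 + (t : ℕ) * stil) b * g' m b))
          = ∑ t : Fin L2, ∑ m, ∑ m', ∑ a, ∑ b,
            (window ktil (fun j => a0 m ω j - abar0 m j) (1 + (t : ℕ) * stil) a
              * window ktil (fun j => a0 m' ω j - abar0 m' j) (1 + (t : ℕ) * stil) b)
              * (g m a * g' m' b) := by
        refine Finset.sum_congr rfl fun t _ => ?_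
        rw [Finset.sum_mul_sum]
        refine Finset.sum_congr rfl fun m _ => Finset.sum_congr rfl fun m' _ => ?_
        rw [Finset.sum_mul_sum]
        exact Finset.sum_congr rfl fun a _ => Finset.sum_congr rfl fun b _ => by ring
      rw [h1, FuseAux.sum_comm5]
      refine Finset.sum_congr rfl fun m _ => Finset.sum_congr rfl fun m' _ =>
        Finset.sum_congr rfl fun a _ => Finset.sum_congr rfl fun b _ =>
          (Finset.sum_mul _ _ _).symm
    simp only [heq]
    rw [integral_finset_sum _ fun m _ => integrable_finset_sum _ fun m' _ =>
      integrable_finset_sum _ fun a _ => integrable_finset_sum _ fun b _ =>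
        (integrable_finset_sum _ fun t _ => hIww00 m m' _ _ a b).mul_const _]
    unfold FuseAux.B
    refine Finset.sum_congr rfl fun m _ => ?_
    rw [integral_finset_sum _ fun m' _ =>
      integrable_finset_sum _ fun a _ => integrable_finset_sum _ fun b _ =>
        (integrable_finset_sum _ fun t _ => hIww00 m m' _ _ a b).mul_const _]
    rw [Finset.sum_eq_single m]
    · rw [integral_finset_sum _ fun a _ => integrable_finset_sum _ fun b _ =>
        (integrable_finset_sum _ fun t _ => hIww00 m m _ _ a b).mul_const _]
      refine Finset.sum_congr rfl fun a _ => ?_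
      rw [integral_finset_sum _ fun b _ =>
        (integrable_finset_sum _ fun t _ => hIww00 m m _ _ a b).mul_const _]
      refine Finset.sum_congr rfl fun b _ => ?_
      rw [integral_mul_const, ← hU m a b]
      ring
    · intro m' _ hm'
      have hzero : ∀ (a b : Fin ktil),
          (∫ ω, (∑ t : Fin L2,
            window ktil (fun j => a0 m ω j - abar0 m j) (1 + (t : ℕ) * stil) a
              * window ktil (fun j => a0 m' ω j - abar0 m' j) (1 + (t : ℕ) * stil) b)
            * (g m a * g' m' b) ∂μ) = 0 := by
        intro a b
        rw [integral_mul_const, integral_finset_sum _ fun t _ => hIww00 m m' _ _ a b]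
        have : ∀ t ∈ Finset.univ (α := Fin L2), (∫ ω,
            window ktil (fun j => a0 m ω j - abar0 m j) (1 + (t : ℕ) * stil) a
              * window ktil (fun j => a0 m' ω j - abar0 m' j) (1 + (t : ℕ) * stil) b ∂μ) = 0 :=
          fun t _ => hUc m m' (Ne.symm hm') _ _ a b
        rw [Finset.sum_congr rfl this, Finset.sum_const_zero, zero_mul]
      rw [integral_finset_sum _ fun a _ => integrable_finset_sum _ fun b _ =>
        (integrable_finset_sum _ fun t _ => hIww00 m m' _ _ a b).mul_const _]
      refine Finset.sum_eq_zero fun a _ => ?_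
      rw [integral_finset_sum _ fun b _ =>
        (integrable_finset_sum _ fun t _ => hIww00 m m' _ _ a b).mul_const _]
      exact Finset.sum_eq_zero fun b _ => hzero a b
    · intro hmem
      exact absurd (Finset.mem_univ m) hmem
  -- auxiliary integrability for the expansion of F
  have hIvWsum : ∀ (g : Fin M → Fin ktil → ℝ) (t : Fin L2),
      Integrable (fun ω => v ω t * (∑ m, ∑ a,
        window ktil (fun j => a0 m ω j - abar0 m j) (1 + (t : ℕ) * stil) a * g m a)) μ := by
    intro g t
    have heq : (fun ω => v ω t * (∑ m, ∑ a,
        window ktil (fun j => a0 m ω j - abar0 m j) (1 + (t : ℕ) * stil) a * g m a))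
        = fun ω => ∑ m, ∑ a,
            (v ω t * window ktil (fun j => a0 m ω j - abar0 m j) (1 + (t : ℕ) * stil) a)
              * g m a := by
      funext ω
      rw [Finset.mul_sum]
      refine Finset.sum_congr rfl fun m _ => ?_
      rw [Finset.mul_sum]
      exact Finset.sum_congr rfl fun a _ => by ring
    rw [heq]
    exact integrable_finset_sum _ fun m _ => integrable_finset_sum _ fun a _ =>
      (hIvw t m _ a).mul_const _
  have hIWWsum : ∀ (g g' : Fin M → Fin ktil → ℝ) (t : Fin L2),
      Integrable (fun ω => (∑ m, ∑ a,
        window ktil (fun j => a0 m ω j - abar0 m j) (1 + (t : ℕ) * stil) a * g m a)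
        * (∑ m, ∑ b,
          window ktil (fun j => a0 m ω j - abar0 m j) (1 + (t : ℕ) * stil) b * g' m b)) μ := by
    intro g g' t
    have heq : (fun ω => (∑ m, ∑ a,
        window ktil (fun j => a0 m ω j - abar0 m j) (1 + (t : ℕ) * stil) a * g m a)
        * (∑ m, ∑ b,
          window ktil (fun j => a0 m ω j - abar0 m j) (1 + (t : ℕ) * stil) b * g' m b))
        = fun ω => ∑ m, ∑ m', ∑ a, ∑ b,
            (window ktil (fun j => a0 m ω j - abar0 m j) (1 + (t : ℕ) * stil) a
              * window ktil (fun j => a0 m' ω j - abar0 m' j) (1 + (t : ℕ) * stil) b)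
              * (g m a * g' m' b) := by
      funext ω
      rw [Finset.sum_mul_sum]
      refine Finset.sum_congr rfl fun m _ => Finset.sum_congr rfl fun m' _ => ?_
      rw [Finset.sum_mul_sum]
      exact Finset.sum_congr rfl fun a _ => Finset.sum_congr rfl fun b _ => by ring
    rw [heq]
    exact integrable_finset_sum _ fun m _ => integrable_finset_sum _ fun m' _ =>
      integrable_finset_sum _ fun a _ => integrable_finset_sum _ fun b _ =>
        (hIww00 m m' _ _ a b).mul_const _
  -- the key expansion of F
  have keyF : ∀ g : Fin M → Fin ktil → ℝ,
      F g = (∫ ω, ∑ t : Fin L2, (v ω t) ^ 2 ∂μ) - 2 * FuseAux.S z g + FuseAux.B U g g := by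
    intro g
    rw [hF g]
    have heq : ∀ ω, (∑ t : Fin L2,
        ((v ω - ∑ m, strideConv ktil stil L2 (g m) (fun j => a0 m ω j - abar0 m j)) t) ^ 2)
        = (∑ t : Fin L2, (v ω t) ^ 2)
          - (∑ t : Fin L2, v ω t * (∑ m, ∑ a,
              window ktil (fun j => a0 m ω j - abar0 m j) (1 + (t : ℕ) * stil) a * g m a)) * 2
          + ∑ t : Fin L2, (∑ m, ∑ a,
              window ktil (fun j => a0 m ω j - abar0 m j) (1 + (t : ℕ) * stil) a * g m a)
            * (∑ m, ∑ b,
              window ktil (fun j => a0 m ω j - abar0 m j) (1 + (t : ℕ) * stil) b * g m b) := by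
      intro ω
      simp only [Pi.sub_apply, Finset.sum_apply, strideConv]
      rw [Finset.sum_mul, ← Finset.sum_sub_distrib, ← Finset.sum_add_distrib]
      refine Finset.sum_congr rfl fun t _ => ?_
      ring
    simp only [heq]
    have IA : Integrable (fun ω => ∑ t : Fin L2, (v ω t) ^ 2) μ :=
      integrable_finset_sum _ fun t _ => by simpa [pow_two] using hIvv t t
    have IB : Integrable (fun ω => (∑ t : Fin L2, v ω t * (∑ m, ∑ a,
        window ktil (fun j => a0 m ω j - abar0 m j) (1 + (t : ℕ) * stil) a * g m a)) * 2) μ :=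
      (integrable_finset_sum _ fun t _ => hIvWsum g t).mul_const 2
    have IC : Integrable (fun ω => ∑ t : Fin L2, (∑ m, ∑ a,
        window ktil (fun j => a0 m ω j - abar0 m j) (1 + (t : ℕ) * stil) a * g m a)
        * (∑ m, ∑ b,
          window ktil (fun j => a0 m ω j - abar0 m j) (1 + (t : ℕ) * stil) b * g m b)) μ :=
      integrable_finset_sum _ fun t _ => hIWWsum g g t
    have IAB : Integrable (fun ω => (∑ t : Fin L2, (v ω t) ^ 2)
        - (∑ t : Fin L2, v ω t * (∑ m, ∑ a,
            window ktil (fun j => a0 m ω j - abar0 m j) (1 + (t : ℕ) * stil) a * g m a)) * 2) μ :=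
      IA.sub IB
    rw [integral_add IAB IC, integral_sub IA IB, integral_mul_const]
    rw [hintvW g, hintWW g g]
    ring
  -- symmetry and positivity
  have hsymm : ∀ m a b, U m a b = U m b a := by
    intro m a b
    rw [hU m a b, hU m b a]
    exact integral_congr_ae (Filter.Eventually.of_forall fun ω =>
      Finset.sum_congr rfl fun t _ => mul_comm _ _)
  have hpos : ∀ d : Fin M → Fin ktil → ℝ, 0 ≤ FuseAux.B U d d := by
    intro d
    rw [← hintWW d d]
    exact integral_nonneg fun ω => Finset.sum_nonneg fun t _ => mul_self_nonneg _
  -- conclusion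
  intro htil
  have equiv : (∀ g : Fin M → Fin ktil → ℝ, F htil ≤ F g)
      ↔ (∀ g : Fin M → Fin ktil → ℝ,
          -2 * FuseAux.S z htil + FuseAux.B U htil htil
            ≤ -2 * FuseAux.S z g + FuseAux.B U g g) := by
    constructor
    · intro H g
      have h0 := H g
      rw [keyF htil, keyF g] at h0
      linarith
    · intro H g
      have h0 := H g
      rw [keyF htil, keyF g]
      linarith
  rw [equiv]
  exact FuseAux.abstract_min U z hsymm hpos htil

end
end
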